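/- Chen's identity (split form): Let x : ℝ → ℝ^d be a continuously differentiable path, let s ≤ m ≤ t be real numbers, and let (i_1, …, i_k) ∈ {1, …, d}^k be a word. Then S_{(i_1, …, i_k)}(x)_{[s,t]} = Σ_{ℓ=0}^{k} S_{(i_1, …, i_ℓ)}(x)_{[s,m]} · S_{(i_{ℓ+1}, …, i_k)}(x)_{[m,t]}, where the ℓ = 0 and ℓ = k terms use the empty-word convention S_{()} = 1. -/

import Mathlib

open intervalIntegral Topology Filter

/-- Coordinate signature, recursing on the *reversed* word: the head of the
list is the last letter `i_k` of the word. -/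
noncomputable def sigRev {d : ℕ} (x : ℝ → Fin d → ℝ) (s : ℝ) : List (Fin d) → ℝ → ℝ
  | [], _ => 1
  | i :: w, t => ∫ u in s..t, sigRev x s w u * deriv (fun v => x v i) u

/-- Coordinate signature `S_{(i_1,…,i_k)}(x)_{[s,t]}` of a path `x : ℝ → ℝ^d`,
defined by `S_{()} = 1` and
`S_{(i_1,…,i_k)}(x)_{[s,t]} = ∫_s^t S_{(i_1,…,i_{k-1})}(x)_{[s,u]} · x_{i_k}'(u) du`. -/
noncomputable def sig {d : ℕ} (x : ℝ → Fin d → ℝ) (s t : ℝ) (w : List (Fin d)) : ℝ :=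
  sigRev x s w.reverse t

lemma derivCont {d : ℕ} (x : ℝ → Fin d → ℝ) (hx : ContDiff ℝ 1 x) (i : Fin d) :
    Continuous (deriv fun v => x v i) :=
  (((ContinuousLinearMap.proj i : (Fin d → ℝ) →L[ℝ] ℝ).contDiff.comp hx)).continuous_deriv le_rfl

lemma sigRev_continuous {d : ℕ} (x : ℝ → Fin d → ℝ) (hx : ContDiff ℝ 1 x) (s : ℝ) :
    ∀ w : List (Fin d), Continuous (sigRev x s w)
  | [] => continuous_const
  | i :: w => by
    have h := (sigRev_continuous x hx s w).mul (derivCont x hx i)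
    exact intervalIntegral.continuous_primitive (fun a b => h.intervalIntegrable a b) s

lemma chenRev {d : ℕ} (x : ℝ → Fin d → ℝ) (hx : ContDiff ℝ 1 x) (s m : ℝ) (hsm : s ≤ m) :
    ∀ (w : List (Fin d)) (t : ℝ), m ≤ t →
      sigRev x s w t = ∑ j ∈ Finset.range (w.length + 1),
        sigRev x s (w.drop j) m * sigRev x m (w.take j) t
  | [], t, _ => by simp [sigRev]
  | i :: w, t, hmt => by
    have g := derivCont x hx i
    have hint : ∀ (a b c : ℝ) (v : List (Fin d)),
        IntervalIntegrable (fun u => sigRev x a v u * deriv (fun v => x v i) u)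
          MeasureTheory.volume b c :=
      fun a b c v => ((sigRev_continuous x hx a v).mul g).intervalIntegrable b c
    have hsplit : sigRev x s (i :: w) t =
        (∫ u in s..m, sigRev x s w u * deriv (fun v => x v i) u) +
          ∫ u in m..t, sigRev x s w u * deriv (fun v => x v i) u := by
      rw [show sigRev x s (i :: w) t = ∫ u in s..t, sigRev x s w u * deriv (fun v => x v i) u
        from rfl,
        ← intervalIntegral.integral_add_adjacent_intervals (hint s s m w) (hint s m t w)]
    have hmid : (∫ u in m..t, sigRev x s w u * deriv (fun v => x v i) u)
        = ∑ j ∈ Finset.range (w.length + 1),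
            sigRev x s (w.drop j) m * sigRev x m (i :: w.take j) t := by
      have h1 : (∫ u in m..t, sigRev x s w u * deriv (fun v => x v i) u)
          = ∫ u in m..t, (∑ j ∈ Finset.range (w.length + 1),
              sigRev x s (w.drop j) m * (sigRev x m (w.take j) u * deriv (fun v => x v i) u)) := by
        apply intervalIntegral.integral_congr
        intro u hu
        rw [Set.uIcc_of_le hmt] at hu
        show sigRev x s w u * deriv (fun v => x v i) u =
          ∑ j ∈ Finset.range (w.length + 1),
            sigRev x s (w.drop j) m * (sigRev x m (w.take j) u * deriv (fun v => x v i) u)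
        rw [chenRev x hx s m hsm w u hu.1, Finset.sum_mul]
        simp [mul_assoc]
      rw [h1, intervalIntegral.integral_finset_sum]
      · refine Finset.sum_congr rfl fun j _ => ?_
        rw [intervalIntegral.integral_const_mul]
        rfl
      · intro j _
        exact (continuous_const.mul ((sigRev_continuous x hx m (w.take j)).mul g)).intervalIntegrable _ _
    have hfirst : (∫ u in s..m, sigRev x s w u * deriv (fun v => x v i) u)
        = sigRev x s (i :: w) m := rfl
    rw [hsplit, hmid, hfirst]
    conv_rhs => rw [show (i :: w).length + 1 = w.length + 1 + 1 from rfl, Finset.sum_range_succ']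
    simp only [List.take_succ_cons, List.drop_succ_cons, List.take_zero, List.drop_zero]
    rw [show sigRev x m ([] : List (Fin d)) t = 1 from rfl, mul_one]
    ring

/-- Chen's identity (split form). -/
theorem chen_identity_split {d : ℕ} (x : ℝ → Fin d → ℝ) (hx : ContDiff ℝ 1 x)
    (s m t : ℝ) (hsm : s ≤ m) (hmt : m ≤ t) (w : List (Fin d)) :
    sig x s t w =
      ∑ ℓ ∈ Finset.range (w.length + 1),
        sig x s m (w.take ℓ) * sig x m t (w.drop ℓ) := by
  have h := chenRev x hx s m hsm w.reverse t hmt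
  rw [sig, h, ← Finset.sum_range_reflect]
  rw [List.length_reverse]
  refine Finset.sum_congr rfl fun j hj => ?_
  rw [Finset.mem_range] at hj
  have hj' : j ≤ w.length := Nat.lt_succ_iff.mp hj
  rw [show w.length + 1 - 1 - j = w.length - j from by omega]
  rw [sig, sig, List.take_reverse, List.drop_reverse]
  rw [show w.length - (w.length - j) = j from by omega]
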